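/- Let A be a complete discrete valuation ring with maximal ideal 𝔪. Fix integers e ≥ 0 and n ≥ m ≥ 1. Let f₁, …, f_m ∈ A[x₁, …, x_n] be polynomials and suppose a = (a₁, …, a_n) ∈ Aⁿ satisfies f_i(a) ∈ 𝔪^{2e+1} for all 1 ≤ i ≤ m. Suppose that the determinant of the m×m matrix ((∂f_i/∂x_j)(a))_{1 ≤ i,j ≤ m}, formed by the first m columns of the Jacobian matrix of (f₁,…,f_m) evaluated at a, does not lie in 𝔪^{e+1}. Then there exists a unique b = (b₁, …, b_n) ∈ Aⁿ such that f_i(b) = 0 for all 1 ≤ i ≤ m, b_i ≡ a_i mod 𝔪^{e+1} for 1 ≤ i ≤ m, and b_i = a_i for m+1 ≤ i ≤ n. (Note: a is only required to lie in Aⁿ, not in 𝔪ⁿ.) -/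

import Mathlib

open MvPolynomial Matrix

/-- Second-order Taylor: remainder lies in the square of the ideal generated by the increment. -/
lemma mv_taylor2 {A : Type*} [CommRing A] {σ : Type*} [Fintype σ] [DecidableEq σ]
    (p : MvPolynomial σ A) (x h : σ → A) :
    eval (x + h) p - eval x p - ∑ j, h j * eval x (pderiv j p)
      ∈ (Ideal.span (Set.range h)) ^ 2 := by
  have hIh : ∀ j, h j ∈ Ideal.span (Set.range h) := fun j => Ideal.subset_span ⟨j, rfl⟩
  induction p using MvPolynomial.induction_on with
  | C a => simp
  | add p q hp hq =>
      have := Ideal.add_mem _ hp hq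
      convert this using 1
      simp only [map_add, mul_add, Finset.sum_add_distrib]
      ring
  | mul_X p i hp =>
      have hL : (∑ j, h j * eval x (pderiv j p)) ∈ Ideal.span (Set.range h) :=
        Ideal.sum_mem _ fun j _ => Ideal.mul_mem_right _ _ (hIh j)
      have hsum : ∑ j, h j * eval x (pderiv j (p * X i))
          = (∑ j, h j * eval x (pderiv j p)) * x i + h i * eval x p := by
        have : ∀ j, h j * eval x (pderiv j (p * X i))
            = h j * (eval x (pderiv j p)) * x i + (if j = i then h j * eval x p else 0) := by
          intro j
          rw [pderiv_mul]
          rcases eq_or_ne j i with rfl | hji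
          · simp [pderiv_X_self]; ring
          · simp [pderiv_X_of_ne (Ne.symm hji), hji]; ring
        rw [Finset.sum_congr rfl fun j _ => this j, Finset.sum_add_distrib,
          Finset.sum_ite_eq' Finset.univ i (fun j => h j * eval x p)]
        simp [Finset.sum_mul]
      have key : eval (x + h) (p * X i) - eval x (p * X i)
            - ∑ j, h j * eval x (pderiv j (p * X i))
          = (eval (x + h) p - eval x p - ∑ j, h j * eval x (pderiv j p)) * (x i + h i)
            + (∑ j, h j * eval x (pderiv j p)) * h i := by
        rw [hsum]
        simp only [_root_.map_mul, eval_X, Pi.add_apply]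
        ring
      rw [key]
      exact add_mem (Ideal.mul_mem_right _ _ hp)
        (by rw [sq]; exact Ideal.mul_mem_mul hL (hIh i))

/-- First-order congruence. -/
lemma eval_sub_mem {A : Type*} [CommRing A] {σ : Type*} [Fintype σ] [DecidableEq σ]
    (p : MvPolynomial σ A) {x y : σ → A} {J : Ideal A}
    (hxy : ∀ j, x j - y j ∈ J) : eval x p - eval y p ∈ J := by
  have ht := mv_taylor2 p y (x - y)
  have hx : y + (x - y) = x := by funext j; simp
  rw [hx] at ht
  have hspan : Ideal.span (Set.range (x - y)) ≤ J :=
    Ideal.span_le.mpr (by rintro _ ⟨j, rfl⟩; exact hxy j)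
  have hr : eval x p - eval y p - ∑ j, (x - y) j * eval y (pderiv j p) ∈ J :=
    Ideal.pow_le_self two_ne_zero (Ideal.pow_right_mono hspan 2 ht)
  have hs : (∑ j, (x - y) j * eval y (pderiv j p)) ∈ J :=
    Ideal.sum_mem _ fun j _ => Ideal.mul_mem_right _ _ (hxy j)
  have := add_mem hr hs
  simpa using this

lemma det_sub_mem {A : Type*} [CommRing A] {m : ℕ} (M N : Matrix (Fin m) (Fin m) A)
    (J : Ideal A) (h : ∀ i j, M i j - N i j ∈ J) : M.det - N.det ∈ J := by
  rw [← Ideal.Quotient.eq]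
  rw [RingHom.map_det, RingHom.map_det]
  congr 1
  ext i j
  exact Ideal.Quotient.eq.mpr (h i j)

lemma dvr_cancel {A : Type*} [CommRing A] [IsDomain A] [IsDiscreteValuationRing A] {ϖ : A}
    (hϖ : Irreducible ϖ) {q x : A} {d N : ℕ} (hq : ¬ ϖ ^ (d + 1) ∣ q)
    (hd : d ≤ N) (hqx : ϖ ^ N ∣ q * x) : ϖ ^ (N - d) ∣ x := by
  have hq0 : q ≠ 0 := by rintro rfl; exact hq (dvd_zero _)
  obtain ⟨k, u, hu⟩ := IsDiscreteValuationRing.associated_pow_irreducible hq0 hϖ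
  have hqe : q = ϖ ^ k * ↑u⁻¹ := by
    calc q = q * ↑u * ↑u⁻¹ := by rw [mul_assoc, Units.mul_inv, mul_one]
    _ = ϖ ^ k * ↑u⁻¹ := by rw [hu]
  have hkd : k ≤ d := by
    by_contra hcon
    exact hq ((pow_dvd_pow ϖ (by omega : d + 1 ≤ k)).trans ⟨↑u⁻¹, hqe⟩)
  have hsplit : ϖ ^ N = ϖ ^ k * ϖ ^ (N - k) := by rw [← pow_add]; congr 1; omega
  have h2 : ϖ ^ k * ϖ ^ (N - k) ∣ ϖ ^ k * ((↑u⁻¹ : Aˣ) * x) := by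
    rw [← hsplit]
    calc ϖ ^ N ∣ q * x := hqx
    _ = ϖ ^ k * ((↑u⁻¹ : Aˣ) * x) := by rw [hqe]; ring
  have h3 : ϖ ^ (N - k) ∣ (↑u⁻¹ : Aˣ) * x :=
    (mul_dvd_mul_iff_left (pow_ne_zero k hϖ.ne_zero)).mp h2
  have h4 : ϖ ^ (N - d) ∣ (↑u⁻¹ : Aˣ) * x := (pow_dvd_pow ϖ (by omega)).trans h3
  have hxe : x = ↑u * ((↑u⁻¹ : Aˣ) * x) := by rw [← mul_assoc, Units.mul_inv, one_mul]
  rw [hxe]; exact Dvd.dvd.mul_left h4 _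

lemma sum_extend {A : Type*} [CommRing A] {m n : ℕ} (hmn : m ≤ n) (h : Fin m → A)
    (g : Fin n → A) :
    ∑ j : Fin n, (if hj : (j : ℕ) < m then h ⟨j, hj⟩ else 0) * g j
      = ∑ j : Fin m, h j * g (Fin.castLE hmn j) := by
  classical
  rw [← Finset.sum_subset (Finset.subset_univ
    ((Finset.univ : Finset (Fin m)).map (Fin.castLEEmb hmn))) ?_]
  · rw [Finset.sum_map]
    apply Finset.sum_congr rfl
    intro j _
    have hcoe : ((Fin.castLEEmb hmn) j : Fin n) = Fin.castLE hmn j := rfl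
    rw [hcoe, dif_pos (by simpa using j.isLt)]
    congr 1
  · intro j _ hj
    rw [dif_neg, zero_mul]
    intro hjm
    exact hj (Finset.mem_map.mpr ⟨⟨j, hjm⟩, Finset.mem_univ _, by ext; simp⟩)

lemma hensel_step {A : Type*} [CommRing A] [IsDomain A] [IsDiscreteValuationRing A]
    {ϖ : A} (hϖ : Irreducible ϖ)
    (e m n k : ℕ) (hmn : m ≤ n) (f : Fin m → MvPolynomial (Fin n) A) (b : Fin n → A)
    (hdet : ¬ ϖ ^ (e + 1) ∣ (Matrix.of fun i j : Fin m =>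
        eval b (pderiv (Fin.castLE hmn j) (f i))).det)
    (hfb : ∀ i, ϖ ^ (2 * e + 1 + k) ∣ eval b (f i)) :
    ∃ c : Fin n → A, (∀ j : Fin n, ϖ ^ (e + 1 + k) ∣ (c j - b j)) ∧
      (∀ j : Fin n, m ≤ (j : ℕ) → c j = b j) ∧
      (∀ i, ϖ ^ (2 * e + 1 + (k + 1)) ∣ eval c (f i)) := by
  classical
  set J : Matrix (Fin m) (Fin m) A :=
    Matrix.of (fun i j => eval b (pderiv (Fin.castLE hmn j) (f i))) with hJdef
  set F : Fin m → A := fun i => eval b (f i) with hFdef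
  have hd0 : J.det ≠ 0 := fun h0 => hdet (h0 ▸ dvd_zero _)
  obtain ⟨d, u, hu⟩ := IsDiscreteValuationRing.associated_pow_irreducible hd0 hϖ
  have hdetu : J.det = ϖ ^ d * ↑u⁻¹ := by
    calc J.det = J.det * ↑u * ↑u⁻¹ := by rw [mul_assoc, Units.mul_inv, mul_one]
    _ = ϖ ^ d * ↑u⁻¹ := by rw [hu]
  have hde : d ≤ e := by
    by_contra hcon
    have h1 : ϖ ^ (e + 1) ∣ ϖ ^ d := pow_dvd_pow ϖ (by omega)
    have h2 : ϖ ^ d ∣ J.det := ⟨(↑u⁻¹ : A), hdetu⟩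
    exact hdet (h1.trans h2)
  have hc' : ∀ i, ϖ ^ (2 * e + 1 + k) ∣ (J.adjugate *ᵥ F) i := by
    intro i
    have : (J.adjugate *ᵥ F) i = ∑ j, J.adjugate i j * F j := rfl
    rw [this]
    exact Finset.dvd_sum fun j _ => Dvd.dvd.mul_left (hfb j) _
  have hw : ∀ i : Fin m, ∃ w : A, (J.adjugate *ᵥ F) i = ϖ ^ d * w ∧ ϖ ^ (e + 1 + k) ∣ w := by
    intro i
    obtain ⟨t, ht⟩ := hc' i
    refine ⟨ϖ ^ (2 * e + 1 + k - d) * t, ?_, dvd_mul_of_dvd_left (pow_dvd_pow ϖ (by omega)) _⟩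
    rw [ht, ← mul_assoc, ← pow_add]
    congr 2
    omega
  choose w hw1 hw2 using hw
  -- J *ᵥ (adjugate J *ᵥ F) = det • F
  have hkey : ∀ i, ϖ ^ d * (J *ᵥ w) i = ϖ ^ d * (↑u⁻¹ * F i) := by
    intro i
    have h1 : (J *ᵥ (J.adjugate *ᵥ F)) i = J.det * F i := by
      rw [Matrix.mulVec_mulVec, Matrix.mul_adjugate, Matrix.smul_mulVec,
        Matrix.one_mulVec]
      rfl
    have h2 : (J *ᵥ (J.adjugate *ᵥ F)) i = ϖ ^ d * (J *ᵥ w) i := by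
      have : (J.adjugate *ᵥ F) = fun j => ϖ ^ d * w j := funext fun j => hw1 j
      rw [this]
      show ∑ j, J i j * (ϖ ^ d * w j) = ϖ ^ d * ∑ j, J i j * w j
      rw [Finset.mul_sum]
      exact Finset.sum_congr rfl fun j _ => by ring
    rw [← h2, h1, hdetu]
    ring
  have hJw : ∀ i, (J *ᵥ w) i = ↑u⁻¹ * F i := fun i =>
    mul_left_cancel₀ (pow_ne_zero d hϖ.ne_zero) (hkey i)
  set h' : Fin m → A := fun i => -(↑u * w i) with hh'def
  have hJh : ∀ i, ∑ j, J i j * h' j = -F i := by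
    intro i
    have : ∀ j, J i j * h' j = -(↑u * (J i j * w j)) := fun j => by
      simp only [hh'def]; ring
    rw [Finset.sum_congr rfl fun j _ => this j, Finset.sum_neg_distrib, ← Finset.mul_sum]
    have : ∑ j, J i j * w j = ↑u⁻¹ * F i := hJw i
    rw [this, ← mul_assoc, Units.mul_inv, one_mul]
  set H : Fin n → A := fun j => if hj : (j : ℕ) < m then h' ⟨j, hj⟩ else 0 with hHdef
  have hHdvd : ∀ j, ϖ ^ (e + 1 + k) ∣ H j := by
    intro j
    simp only [hHdef]
    split
    · exact dvd_neg.mpr (Dvd.dvd.mul_left (hw2 _) _)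
    · exact dvd_zero _
  refine ⟨b + H, fun j => by simpa using hHdvd j, fun j hj => ?_, fun i => ?_⟩
  · have : H j = 0 := dif_neg (by omega)
    simp [this]
  · have ht := mv_taylor2 (f i) b H
    have hsum : ∑ j, H j * eval b (pderiv j (f i)) = -F i := by
      rw [hHdef]
      rw [sum_extend hmn h' (fun j => eval b (pderiv j (f i)))]
      rw [← hJh i]
      exact Finset.sum_congr rfl fun j _ => mul_comm _ _
    have hmem : eval (b + H) (f i) - eval b (f i) - (-F i) ∈
        (Ideal.span (Set.range H)) ^ 2 := hsum ▸ ht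
    have hle : (Ideal.span (Set.range H)) ^ 2 ≤ Ideal.span {ϖ ^ (2 * (e + 1 + k))} := by
      have h1 : Ideal.span (Set.range H) ≤ Ideal.span {ϖ ^ (e + 1 + k)} :=
        Ideal.span_le.mpr (by rintro _ ⟨j, rfl⟩; exact Ideal.mem_span_singleton.mpr (hHdvd j))
      calc (Ideal.span (Set.range H)) ^ 2 ≤ (Ideal.span {ϖ ^ (e + 1 + k)}) ^ 2 :=
            Ideal.pow_right_mono h1 2
      _ = Ideal.span {ϖ ^ (2 * (e + 1 + k))} := by
            rw [Ideal.span_singleton_pow, ← pow_mul, mul_comm]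
    have hdvd : ϖ ^ (2 * (e + 1 + k)) ∣ eval (b + H) (f i) :=
      Ideal.mem_span_singleton.mp (by
        have := hle hmem
        simpa [hFdef] using this)
    exact (pow_dvd_pow ϖ (by omega)).trans hdvd

/-- **Multivariate Hensel's Lemma.** Let `A` be a complete discrete valuation ring with
maximal ideal `𝔪`. Fix integers `e ≥ 0` and `n ≥ m ≥ 1`, polynomials
`f₁, …, f_m ∈ A[x₁, …, x_n]` and a point `a ∈ Aⁿ` with `f i a ∈ 𝔪^(2e+1)` for all `i`.
If the determinant of the `m × m` matrix formed by the first `m` columns of the Jacobian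
of `f` at `a` does not lie in `𝔪^(e+1)`, then there is a unique `b ∈ Aⁿ` with
`f i b = 0` for all `i`, `b i ≡ a i mod 𝔪^(e+1)` for the first `m` coordinates, and
`b i = a i` for the remaining coordinates. -/
theorem multivariate_hensel
    {A : Type*} [CommRing A] [IsDomain A] [IsDiscreteValuationRing A]
    [IsAdicComplete (IsLocalRing.maximalIdeal A) A]
    (e m n : ℕ) (hm : 1 ≤ m) (hmn : m ≤ n)
    (f : Fin m → MvPolynomial (Fin n) A) (a : Fin n → A)
    (ha : ∀ i : Fin m,
      MvPolynomial.eval a (f i) ∈ (IsLocalRing.maximalIdeal A) ^ (2 * e + 1))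
    (hjac : (Matrix.of fun i j : Fin m =>
        MvPolynomial.eval a (MvPolynomial.pderiv (Fin.castLE hmn j) (f i))).det ∉
        (IsLocalRing.maximalIdeal A) ^ (e + 1)) :
    ∃! b : Fin n → A,
      (∀ i : Fin m, MvPolynomial.eval b (f i) = 0) ∧
      (∀ i : Fin n, (i : ℕ) < m → b i - a i ∈ (IsLocalRing.maximalIdeal A) ^ (e + 1)) ∧
      (∀ i : Fin n, m ≤ (i : ℕ) → b i = a i) := by
  classical
  obtain ⟨ϖ, hϖ⟩ := IsDiscreteValuationRing.exists_irreducible A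
  have hmem : ∀ (N : ℕ) (x : A), x ∈ (IsLocalRing.maximalIdeal A) ^ N ↔ ϖ ^ N ∣ x := by
    intro N x
    rw [hϖ.maximalIdeal_eq, Ideal.span_singleton_pow, Ideal.mem_span_singleton]
  have hsmul : ∀ k : ℕ, ((IsLocalRing.maximalIdeal A) ^ k • ⊤ : Submodule A A)
      = (IsLocalRing.maximalIdeal A) ^ k := by
    intro k; rw [← Ideal.one_eq_top, smul_eq_mul, mul_one]
  have hhaus : ∀ x : A, (∀ k : ℕ, ϖ ^ k ∣ x) → x = 0 := by
    intro x hx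
    refine IsHausdorff.haus (IsAdicComplete.toIsHausdorff
      (I := IsLocalRing.maximalIdeal A) (M := A)) x fun k => ?_
    rw [SModEq.zero, hsmul k]
    exact (hmem k x).mpr (hx k)
  -- determinant transfer from a to nearby points
  have hdetb : ∀ b : Fin n → A, (∀ j, ϖ ^ (e + 1) ∣ (b j - a j)) →
      ¬ ϖ ^ (e + 1) ∣ (Matrix.of fun i j : Fin m =>
        eval b (pderiv (Fin.castLE hmn j) (f i))).det := by
    intro b hb hcon
    apply hjac
    rw [hmem]
    have h1 : (Matrix.of fun i j : Fin m =>
          eval a (pderiv (Fin.castLE hmn j) (f i))).det -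
        (Matrix.of fun i j : Fin m =>
          eval b (pderiv (Fin.castLE hmn j) (f i))).det ∈
        Ideal.span {ϖ ^ (e + 1)} := by
      refine det_sub_mem _ _ _ fun i j => ?_
      refine eval_sub_mem _ fun j' => Ideal.mem_span_singleton.mpr ?_
      have := (hb j').neg_right
      simpa using this
    have h1' : ϖ ^ (e + 1) ∣ _ := Ideal.mem_span_singleton.mp h1
    have := dvd_add h1' hcon
    simpa using this
  -- invariant
  set P : ℕ → (Fin n → A) → Prop := fun k b =>
    (∀ j : Fin n, ϖ ^ (e + 1) ∣ (b j - a j)) ∧ (∀ j : Fin n, m ≤ (j : ℕ) → b j = a j) ∧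
    (∀ i : Fin m, ϖ ^ (2 * e + 1 + k) ∣ eval b (f i)) with hPdef
  have hstep : ∀ (k : ℕ) (b : Fin n → A), P k b →
      ∃ c, P (k + 1) c ∧ ∀ j, ϖ ^ (e + 1 + k) ∣ (c j - b j) := by
    rintro k b ⟨hb1, hb2, hb3⟩
    obtain ⟨c, hc1, hc2, hc3⟩ := hensel_step hϖ e m n k hmn f b (hdetb b hb1) hb3
    refine ⟨c, ⟨fun j => ?_, fun j hj => by rw [hc2 j hj, hb2 j hj], hc3⟩, hc1⟩
    have := dvd_add ((pow_dvd_pow ϖ (by omega)).trans (hc1 j)) (hb1 j)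
    simpa [sub_add_sub_cancel] using this
  choose! step_c step_h using hstep
  set bb : ℕ → Fin n → A :=
    fun k => Nat.rec (motive := fun _ => Fin n → A) a (fun k b => step_c k b) k with hbbdef
  have hP : ∀ k, P k (bb k) := by
    intro k
    induction k with
    | zero =>
        refine ⟨fun j => ?_, fun j _ => rfl, fun i => (hmem _ _).mp (ha i)⟩
        show ϖ ^ (e + 1) ∣ a j - a j
        simp
    | succ k ih => exact (step_h k (bb k) ih).1
  have hdiff : ∀ k j, ϖ ^ (e + 1 + k) ∣ (bb (k + 1) j - bb k j) :=
    fun k => (step_h k (bb k) (hP k)).2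
  have hcauchy : ∀ k l, k ≤ l → ∀ j, ϖ ^ k ∣ (bb l j - bb k j) := by
    intro k l hkl
    induction l, hkl using Nat.le_induction with
    | base => intro j; simp
    | succ l hkl ih =>
        intro j
        have h1 : ϖ ^ k ∣ (bb (l + 1) j - bb l j) :=
          (pow_dvd_pow ϖ (by omega)).trans (hdiff l j)
        have := dvd_add h1 (ih j)
        simpa [sub_add_sub_cancel] using this
  have hlim : ∀ j : Fin n, ∃ L, ∀ k, ϖ ^ k ∣ (bb k j - L) := by
    intro j
    obtain ⟨L, hL⟩ := IsPrecomplete.prec (IsAdicComplete.toIsPrecomplete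
      (I := IsLocalRing.maximalIdeal A) (M := A)) (f := fun k => bb k j)
      (fun {k l} hkl => by
        rw [SModEq.sub_mem, hsmul, hmem]
        have := (hcauchy k l hkl j).neg_right
        simpa using this)
    refine ⟨L, fun k => ?_⟩
    have := hL k
    rw [SModEq.sub_mem, hsmul, hmem] at this
    exact this
  choose L hLd using hlim
  -- properties of the limit L
  have hLroot : ∀ i : Fin m, eval L (f i) = 0 := by
    intro i
    refine hhaus _ fun k => ?_
    have h1 : eval L (f i) - eval (bb k) (f i) ∈ Ideal.span {ϖ ^ k} := by
      refine eval_sub_mem _ fun j => Ideal.mem_span_singleton.mpr ?_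
      have := (hLd j k).neg_right
      simpa using this
    have h1' : ϖ ^ k ∣ eval L (f i) - eval (bb k) (f i) := Ideal.mem_span_singleton.mp h1
    have h2 : ϖ ^ k ∣ eval (bb k) (f i) :=
      (pow_dvd_pow ϖ (by omega)).trans ((hP k).2.2 i)
    have := dvd_add h1' h2
    simpa using this
  have hLclose : ∀ j : Fin n, ϖ ^ (e + 1) ∣ (L j - a j) := by
    intro j
    have h1 : ϖ ^ (e + 1) ∣ (L j - bb (e + 1) j) := by
      have := (hLd j (e + 1)).neg_right
      simpa using this
    have := dvd_add h1 ((hP (e + 1)).1 j)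
    simpa [sub_add_sub_cancel] using this
  have hLtail : ∀ j : Fin n, m ≤ (j : ℕ) → L j = a j := by
    intro j hj
    have : L j - a j = 0 := by
      refine hhaus _ fun k => ?_
      have h1 := (hLd j k).neg_right
      rw [(hP k).2.1 j hj] at h1
      simpa using h1
    exact sub_eq_zero.mp this
  -- uniqueness
  have huniq : ∀ y z : Fin n → A,
      ((∀ i : Fin m, eval y (f i) = 0) ∧ (∀ j : Fin n, ϖ ^ (e + 1) ∣ (y j - a j)) ∧
        (∀ j : Fin n, m ≤ (j : ℕ) → y j = a j)) →
      ((∀ i : Fin m, eval z (f i) = 0) ∧ (∀ j : Fin n, ϖ ^ (e + 1) ∣ (z j - a j)) ∧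
        (∀ j : Fin n, m ≤ (j : ℕ) → z j = a j)) → y = z := by
    rintro y z ⟨hy1, hy2, hy3⟩ ⟨hz1, hz2, hz3⟩
    have key : ∀ k : ℕ, ∀ j : Fin n, ϖ ^ (e + 1 + k) ∣ (z j - y j) := by
      intro k
      induction k with
      | zero =>
          intro j
          have := dvd_sub (hz2 j) (hy2 j)
          simpa [Nat.add_zero] using this
      | succ k ih =>
          set Jy : Matrix (Fin m) (Fin m) A :=
            Matrix.of (fun i j => eval y (pderiv (Fin.castLE hmn j) (f i))) with hJydef
          set hm' : Fin m → A := fun j' => z (Fin.castLE hmn j') - y (Fin.castLE hmn j') with hm'def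
          have hvec_eq : (fun j : Fin n => z j - y j)
              = fun j : Fin n => if hj : (j : ℕ) < m then hm' ⟨j, hj⟩ else 0 := by
            funext j
            by_cases hj : (j : ℕ) < m
            · rw [dif_pos hj]
              simp only [hm'def]
              congr 1 <;> · congr 1; ext; simp
            · rw [dif_neg hj, hz3 j (by omega), hy3 j (by omega), sub_self]
          have hJyh : ∀ i : Fin m, ϖ ^ (2 * (e + 1 + k)) ∣ (Jy *ᵥ hm') i := by
            intro i
            have ht := mv_taylor2 (f i) y (fun j => z j - y j)
            have hyz : y + (fun j => z j - y j) = z := by funext j; simp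
            rw [hyz, hy1 i, hz1 i] at ht
            have hle : (Ideal.span (Set.range (fun j : Fin n => z j - y j))) ^ 2 ≤
                Ideal.span {ϖ ^ (2 * (e + 1 + k))} := by
              have h1 : Ideal.span (Set.range (fun j : Fin n => z j - y j)) ≤
                  Ideal.span {ϖ ^ (e + 1 + k)} := by
                refine Ideal.span_le.mpr ?_
                rintro _ ⟨j, rfl⟩
                exact Ideal.mem_span_singleton.mpr (ih j)
              calc (Ideal.span (Set.range (fun j : Fin n => z j - y j))) ^ 2
                  ≤ (Ideal.span {ϖ ^ (e + 1 + k)}) ^ 2 := Ideal.pow_right_mono h1 2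
              _ = Ideal.span {ϖ ^ (2 * (e + 1 + k))} := by
                  rw [Ideal.span_singleton_pow, ← pow_mul, mul_comm]
            have hmem2 := hle ht
            rw [Ideal.mem_span_singleton] at hmem2
            have hsum : ∑ j : Fin n, (z j - y j) * eval y (pderiv j (f i))
                = (Jy *ᵥ hm') i := by
              have : ∑ j : Fin n, (z j - y j) * eval y (pderiv j (f i))
                  = ∑ j : Fin n, (if hj : (j : ℕ) < m then hm' ⟨j, hj⟩ else 0) *
                      eval y (pderiv j (f i)) := by
                refine Finset.sum_congr rfl fun j _ => ?_
                rw [congrFun hvec_eq j]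
              rw [this, sum_extend hmn hm' (fun j => eval y (pderiv j (f i)))]
              show _ = ∑ j, Jy i j * hm' j
              exact Finset.sum_congr rfl fun j _ => mul_comm _ _
            rw [← hsum]
            have := hmem2.neg_right
            simpa using this
          have hdetJy : ¬ ϖ ^ (e + 1) ∣ Jy.det := hdetb y hy2
          have hdvd2 : ∀ i : Fin m, ϖ ^ (2 * (e + 1 + k)) ∣ Jy.det * hm' i := by
            intro i
            have h1 : (Jy.adjugate *ᵥ (Jy *ᵥ hm')) i = Jy.det * hm' i := by
              rw [Matrix.mulVec_mulVec, Matrix.adjugate_mul, Matrix.smul_mulVec,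
                Matrix.one_mulVec]
              rfl
            rw [← h1]
            show ϖ ^ (2 * (e + 1 + k)) ∣ ∑ j, Jy.adjugate i j * (Jy *ᵥ hm') j
            exact Finset.dvd_sum fun j _ => Dvd.dvd.mul_left (hJyh j) _
          have hm'dvd : ∀ i : Fin m, ϖ ^ (e + 1 + (k + 1)) ∣ hm' i := by
            intro i
            have := dvr_cancel hϖ hdetJy (by omega : e ≤ 2 * (e + 1 + k)) (hdvd2 i)
            exact (pow_dvd_pow ϖ (by omega)).trans this
          intro j
          by_cases hj : (j : ℕ) < m
          · have : z j - y j = hm' ⟨j, hj⟩ := by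
              simp only [hm'def]
              congr 1 <;> · congr 1; ext; simp
            rw [this]
            exact hm'dvd _
          · rw [hz3 j (by omega), hy3 j (by omega), sub_self]
            exact dvd_zero _
    funext j
    have : z j - y j = 0 := hhaus _ fun k => (pow_dvd_pow ϖ (by omega)).trans (key k j)
    exact (sub_eq_zero.mp this).symm
  refine ⟨L, ⟨hLroot, fun j _ => (hmem _ _).mpr (hLclose j), hLtail⟩, ?_⟩
  rintro y ⟨hy1, hy2, hy3⟩
  refine huniq y L ⟨hy1, fun j => ?_, hy3⟩ ⟨hLroot, hLclose, hLtail⟩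
  by_cases hj : (j : ℕ) < m
  · exact (hmem _ _).mp (hy2 j hj)
  · rw [hy3 j (by omega), sub_self]
    exact dvd_zero _
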